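/- For any commutative ring R and indeterminate T, the (left) global dimension of R[T] is at most the global dimension of R plus 1. -/

import Mathlib

open TensorProduct Polynomial

/-- `projDimLE R n M` says the `R`-module `M` has projective dimension at most
`n`: for `n = 0` it means `M` is projective, and for `n+1` it means `M` is a
quotient of a projective module whose kernel has projective dimension `≤ n`. -/
def projDimLE (R : Type) [CommRing R] :
    ℕ → (M : Type) → [AddCommGroup M] → [Module R M] → Prop
  | 0, M, _, _ => Module.Projective R M
  | n + 1, M, _, _ => ∃ (P : Type) (_ : AddCommGroup P) (_ : Module R P),
      Module.Projective R P ∧ ∃ f : P →ₗ[R] M, Function.Surjective f ∧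
        projDimLE R n (LinearMap.ker f)

/-- The global dimension of `R` is at most `n` if every `R`-module has
projective dimension at most `n`. -/
def globalDimLE (R : Type) [CommRing R] (n : ℕ) : Prop :=
  ∀ (M : Type) [AddCommGroup M] [Module R M], projDimLE R n M

section aux

variable {R : Type} [CommRing R]

theorem projDimLE_congr {n : ℕ} {M N : Type} [AddCommGroup M] [Module R M]
    [AddCommGroup N] [Module R N] (e : M ≃ₗ[R] N) (h : projDimLE R n M) :
    projDimLE R n N := by
  induction n generalizing M N with
  | zero =>
    haveI : Module.Projective R M := h
    exact Module.Projective.of_equiv e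
  | succ n ih =>
    obtain ⟨P, _, _, hP, f, hf, hker⟩ := h
    refine ⟨P, _, _, hP, e.toLinearMap ∘ₗ f, e.surjective.comp hf, ?_⟩
    have hk : LinearMap.ker (e.toLinearMap ∘ₗ f) = LinearMap.ker f := by
      ext x; simp [LinearMap.mem_ker]
    rw [hk]
    exact hker

theorem projDimLE_succ_of {n : ℕ} {M : Type} [AddCommGroup M] [Module R M]
    (h : projDimLE R n M) : projDimLE R (n + 1) M := by
  induction n generalizing M with
  | zero =>
    haveI : Module.Projective R M := h
    refine ⟨M, _, _, h, LinearMap.id, Function.surjective_id, ?_⟩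
    rw [LinearMap.ker_id]
    haveI : Subsingleton (⊥ : Submodule R M) := inferInstance
    exact Module.Projective.of_equiv
      (LinearEquiv.ofSubsingleton (⊥ : Submodule R M) (⊥ : Submodule R M))
  | succ n ih =>
    obtain ⟨P, _, _, hP, f, hf, hker⟩ := h
    exact ⟨P, _, _, hP, f, hf, ih hker⟩

theorem projDimLE_middle {n : ℕ} {A B C : Type}
    [AddCommGroup A] [Module R A] [AddCommGroup B] [Module R B]
    [AddCommGroup C] [Module R C]
    (f : A →ₗ[R] B) (g : B →ₗ[R] C) (hf : Function.Injective f)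
    (hg : Function.Surjective g) (hfg : Function.Exact f g)
    (hA : projDimLE R n A) (hC : projDimLE R n C) : projDimLE R n B := by
  induction n generalizing A B C with
  | zero =>
    haveI : Module.Projective R A := hA
    haveI : Module.Projective R C := hC
    obtain ⟨l, hl⟩ := Module.projective_lifting_property g LinearMap.id hg
    obtain ⟨e, -⟩ := (hfg.splitSurjectiveEquiv hf) ⟨l, hl⟩
    exact Module.Projective.of_equiv e.symm
  | succ n ih =>
    obtain ⟨PA, _, _, hPA, fA, hfA, hKA⟩ := hA
    obtain ⟨PC, _, _, hPC, fC, hfC, hKC⟩ := hC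
    obtain ⟨l, hl⟩ := Module.projective_lifting_property g fC hg
    have hl' : ∀ x, g (l x) = fC x := fun x => LinearMap.congr_fun hl x
    set F : PA × PC →ₗ[R] B :=
      (f ∘ₗ fA) ∘ₗ LinearMap.fst R PA PC + l ∘ₗ LinearMap.snd R PA PC with hF
    have hFapp : ∀ p q, F (p, q) = f (fA p) + l q := fun p q => rfl
    have hgF : ∀ p q, g (F (p, q)) = fC q := by
      intro p q
      rw [hFapp, map_add, hl']
      have : g (f (fA p)) = 0 := hfg.apply_apply_eq_zero (fA p)
      rw [this, zero_add]
    have hFsurj : Function.Surjective F := by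
      intro b
      obtain ⟨q, hq⟩ := hfC (g b)
      have : g (b - l q) = 0 := by rw [map_sub, hl', hq, sub_self]
      obtain ⟨a, ha⟩ := (hfg (b - l q)).mp this
      obtain ⟨p, hp⟩ := hfA a
      exact ⟨(p, q), by rw [hFapp, hp, ha]; abel⟩
    refine ⟨PA × PC, _, _, inferInstance, F, hFsurj, ?_⟩
    -- short exact sequence of kernels
    have hsub1 : ∀ x : LinearMap.ker fA, ((x : PA), (0 : PC)) ∈ LinearMap.ker F := by
      intro x
      have hx : fA x = 0 := x.2
      simp [LinearMap.mem_ker, hFapp, hx]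
    set α : LinearMap.ker fA →ₗ[R] LinearMap.ker F :=
      LinearMap.codRestrict (LinearMap.ker F)
        ((LinearMap.inl R PA PC) ∘ₗ (LinearMap.ker fA).subtype) hsub1 with hα
    have hsub2 : ∀ x : LinearMap.ker F, ((x : PA × PC).2) ∈ LinearMap.ker fC := by
      rintro ⟨⟨p, q⟩, hx⟩
      have : g (F (p, q)) = 0 := by
        rw [show F (p, q) = 0 from hx, map_zero]
      rw [hgF] at this
      exact this
    set β : LinearMap.ker F →ₗ[R] LinearMap.ker fC :=
      LinearMap.codRestrict (LinearMap.ker fC)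
        ((LinearMap.snd R PA PC) ∘ₗ (LinearMap.ker F).subtype) hsub2 with hβ
    have hαinj : Function.Injective α := by
      intro x y hxy
      apply Subtype.ext
      have := congrArg (fun z : LinearMap.ker F => (z : PA × PC).1) hxy
      exact this
    have hβsurj : Function.Surjective β := by
      rintro ⟨q, hq⟩
      have hq' : fC q = 0 := hq
      have : g (l q) = 0 := by rw [hl', hq']
      obtain ⟨a, ha⟩ := (hfg (l q)).mp this
      obtain ⟨p, hp⟩ := hfA a
      have hmem : (-p, q) ∈ LinearMap.ker F := by
        simp only [LinearMap.mem_ker, hFapp, map_neg, hp, ha]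
        abel
      exact ⟨⟨(-p, q), hmem⟩, rfl⟩
    have hαβ : Function.Exact α β := by
      intro x
      constructor
      · intro hx
        have hx2 : (x : PA × PC).2 = 0 := congrArg Subtype.val hx
        have hx1 : f (fA (x : PA × PC).1) = 0 := by
          have hxk : F ((x : PA × PC).1, (x : PA × PC).2) = 0 := x.2
          rw [hx2] at hxk
          rw [hFapp, map_zero, add_zero] at hxk
          exact hxk
        have hfa : fA (x : PA × PC).1 = 0 := by
          apply hf
          rw [hx1, map_zero]
        refine ⟨⟨(x : PA × PC).1, hfa⟩, ?_⟩
        apply Subtype.ext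
        show ((x : PA × PC).1, (0 : PC)) = (x : PA × PC)
        rw [← hx2]
      · rintro ⟨y, rfl⟩
        apply Subtype.ext
        show ((y : PA), (0 : PC)).2 = 0
        rfl
    exact ih α β hαinj hβsurj hαβ hKA hKC

theorem projDimLE_quot {n : ℕ} {A B C : Type}
    [AddCommGroup A] [Module R A] [AddCommGroup B] [Module R B]
    [AddCommGroup C] [Module R C]
    (f : A →ₗ[R] B) (g : B →ₗ[R] C) (hf : Function.Injective f)
    (hg : Function.Surjective g) (hfg : Function.Exact f g)
    (hA : projDimLE R n A) (hB : projDimLE R n B) : projDimLE R (n + 1) C := by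
  cases n with
  | zero =>
    haveI : Module.Projective R B := hB
    refine ⟨B, _, _, hB, g, hg, ?_⟩
    have hk : LinearMap.ker g = LinearMap.range f := hfg.linearMap_ker_eq
    rw [hk]
    exact projDimLE_congr (LinearEquiv.ofInjective f hf) hA
  | succ n =>
    obtain ⟨P, _, _, hP, h, hh, hK⟩ := hB
    set g' : P →ₗ[R] C := g ∘ₗ h with hg'
    have hg'surj : Function.Surjective g' := hg.comp hh
    refine ⟨P, _, _, hP, g', hg'surj, ?_⟩
    -- SES : ker h → ker g' → A
    have hle : LinearMap.ker h ≤ LinearMap.ker g' := by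
      intro x hx
      simp only [LinearMap.mem_ker] at hx ⊢
      rw [hg', LinearMap.comp_apply, hx, map_zero]
    set ι : LinearMap.ker h →ₗ[R] LinearMap.ker g' := Submodule.inclusion hle with hι
    have hsub : ∀ x : LinearMap.ker g', h (x : P) ∈ LinearMap.range f := by
      rintro ⟨x, hx⟩
      have : g (h x) = 0 := hx
      exact (hfg (h x)).mp this
    set π0 : LinearMap.ker g' →ₗ[R] LinearMap.range f :=
      LinearMap.codRestrict (LinearMap.range f) (h ∘ₗ (LinearMap.ker g').subtype) hsub with hπ0
    set eA : A ≃ₗ[R] LinearMap.range f := LinearEquiv.ofInjective f hf with heA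
    set π : LinearMap.ker g' →ₗ[R] A := (eA.symm : LinearMap.range f →ₗ[R] A) ∘ₗ π0 with hπ
    have hπapp : ∀ x : LinearMap.ker g', f (π x) = h (x : P) := by
      intro x
      have : (eA (π x) : B) = h (x : P) := by
        rw [hπ]
        simp only [LinearMap.comp_apply, LinearEquiv.coe_coe, LinearEquiv.apply_symm_apply]
        rfl
      rw [← this]
      rfl
    have hιinj : Function.Injective ι := Submodule.inclusion_injective hle
    have hπsurj : Function.Surjective π := by
      intro a
      obtain ⟨p, hp⟩ := hh (f a)
      have hpk : p ∈ LinearMap.ker g' := by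
        simp only [LinearMap.mem_ker, hg', LinearMap.comp_apply, hp]
        exact hfg.apply_apply_eq_zero a
      refine ⟨⟨p, hpk⟩, ?_⟩
      apply hf
      rw [hπapp]
      exact hp
    have hιπ : Function.Exact ι π := by
      intro x
      constructor
      · intro hx
        have : h (x : P) = 0 := by
          rw [← hπapp x, hx, map_zero]
        exact ⟨⟨(x : P), this⟩, Subtype.ext rfl⟩
      · rintro ⟨y, rfl⟩
        apply hf
        rw [hπapp, map_zero]
        exact y.2
    exact projDimLE_middle ι π hιinj hπsurj hιπ (projDimLE_succ_of hK) hA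

theorem projDimLE_baseChange {S : Type} [CommRing S] [Algebra R S] [Module.Flat R S]
    {n : ℕ} {M : Type} [AddCommGroup M] [Module R M] (h : projDimLE R n M) :
    projDimLE S n (S ⊗[R] M) := by
  induction n generalizing M with
  | zero =>
    haveI : Module.Projective R M := h
    show Module.Projective S (S ⊗[R] M)
    infer_instance
  | succ n ih =>
    obtain ⟨P, _, _, hP, f, hf, hK⟩ := h
    haveI := hP
    refine ⟨S ⊗[R] P, _, _, inferInstance, f.baseChange S, ?_, ?_⟩
    · show Function.Surjective ⇑(f.baseChange S)
      rw [LinearMap.baseChange_eq_ltensor]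
      exact LinearMap.lTensor_surjective S hf
    · set K := LinearMap.ker f with hKdef
      set j : S ⊗[R] K →ₗ[S] S ⊗[R] P := (K.subtype).baseChange S with hj
      have hjinj : Function.Injective j := by
        show Function.Injective ⇑((K.subtype).baseChange S)
        rw [LinearMap.baseChange_eq_ltensor]
        exact Module.Flat.lTensor_preserves_injective_linearMap K.subtype
          (Submodule.injective_subtype K)
      have hex : Function.Exact (K.subtype.lTensor S) (f.lTensor S) :=
        Module.Flat.lTensor_exact S (LinearMap.exact_subtype_ker_map f)
      have hrange : LinearMap.range j = LinearMap.ker (f.baseChange S) := by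
        ext x
        rw [LinearMap.mem_ker, LinearMap.mem_range]
        have h1 : f.baseChange S x = f.lTensor S x :=
          congrFun (LinearMap.baseChange_eq_ltensor (A := S) (f := f)) x
        have h2 : ∀ y, j y = K.subtype.lTensor S y := fun y =>
          congrFun (LinearMap.baseChange_eq_ltensor (A := S) (f := K.subtype)) y
        rw [h1]
        rw [hex x]
        constructor
        · rintro ⟨y, rfl⟩; exact ⟨y, (h2 y).symm⟩
        · rintro ⟨y, hy⟩; exact ⟨y, by rw [h2 y, hy]⟩
      rw [← hrange]
      exact projDimLE_congr (LinearEquiv.ofInjective j hjinj) (ih hK)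


end aux

section poly

variable (R : Type) [CommRing R]

/-- `R[X]` is `R`-linearly equivalent to `ℕ →₀ R`. -/
noncomputable def polyFinsuppEquiv : Polynomial R ≃ₗ[R] (ℕ →₀ R) :=
  (Polynomial.toFinsuppIsoLinear R).trans (AddMonoidAlgebra.coeffLinearEquiv R)

variable (M : Type) [AddCommGroup M] [Module R M]

/-- Coordinates for `R[X] ⊗[R] M`. -/
noncomputable def cEquiv : (Polynomial R ⊗[R] M) ≃ₗ[R] (ℕ →₀ M) :=
  (TensorProduct.congr (polyFinsuppEquiv R) (LinearEquiv.refl R M)).trans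
    (TensorProduct.finsuppScalarLeft R M ℕ)

lemma cEquiv_tmul (p : Polynomial R) (m : M) (k : ℕ) :
    cEquiv R M (p ⊗ₜ m) k = p.coeff k • m := by
  simp only [cEquiv, LinearEquiv.trans_apply, TensorProduct.congr_tmul,
    LinearEquiv.refl_apply, TensorProduct.finsuppScalarLeft_apply_tmul_apply]
  exact congrArg (· • m) (Polynomial.toFinsupp_apply p k)

lemma cEquiv_monomial (n : ℕ) (r : R) (m : M) :
    cEquiv R M (monomial n r ⊗ₜ m) = Finsupp.single n (r • m) := by
  ext k
  rw [cEquiv_tmul, Polynomial.coeff_monomial, Finsupp.single_apply]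
  split <;> simp

variable [Module (Polynomial R) M] [IsScalarTower R (Polynomial R) M]

/-- Multiplication by a fixed polynomial, as an `R`-linear map. -/
noncomputable def smulPoly (s : Polynomial R) : M →ₗ[R] M where
  toFun m := s • m
  map_add' x y := smul_add s x y
  map_smul' r m := by
    simp only [RingHom.id_apply]
    rw [← algebraMap_smul (Polynomial R) r m, ← algebraMap_smul (Polynomial R) r (s • m),
      smul_smul, smul_smul, mul_comm]

@[simp] lemma smulPoly_apply (s : Polynomial R) (m : M) : smulPoly R M s m = s • m := rfl

/-- Coordinate version of the map `ψ`. -/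
noncomputable def PsiMap : (ℕ →₀ M) →ₗ[R] (ℕ →₀ M) :=
  Finsupp.lmapDomain M R Nat.succ - Finsupp.mapRange.linearMap (smulPoly R M X)

/-- Coordinate version of the map `φ`. -/
noncomputable def PhiMap : (ℕ →₀ M) →ₗ[R] M :=
  Finsupp.lsum ℕ fun k => smulPoly R M (X ^ k)

@[simp] lemma PhiMap_single (n : ℕ) (m : M) :
    PhiMap R M (Finsupp.single n m) = (X : Polynomial R) ^ n • m := by
  simp [PhiMap]

lemma PsiMap_apply_zero (p : ℕ →₀ M) : PsiMap R M p 0 = -((X : Polynomial R) • p 0) := by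
  simp only [PsiMap, LinearMap.sub_apply, Finsupp.sub_apply, Finsupp.lmapDomain_apply,
    Finsupp.mapRange.linearMap_apply, Finsupp.mapRange_apply, smulPoly_apply]
  rw [Finsupp.mapDomain_notin_range]
  · rw [zero_sub]
  · rintro ⟨j, hj⟩
    exact Nat.succ_ne_zero j hj

lemma PsiMap_apply_succ (p : ℕ →₀ M) (j : ℕ) :
    PsiMap R M p (j + 1) = p j - (X : Polynomial R) • p (j + 1) := by
  simp only [PsiMap, LinearMap.sub_apply, Finsupp.sub_apply, Finsupp.lmapDomain_apply,
    Finsupp.mapRange.linearMap_apply, Finsupp.mapRange_apply, smulPoly_apply]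
  rw [show j + 1 = Nat.succ j from rfl, Finsupp.mapDomain_apply Nat.succ_injective]

lemma PsiMap_single (n : ℕ) (m : M) :
    PsiMap R M (Finsupp.single n m) =
      Finsupp.single (n + 1) m - Finsupp.single n ((X : Polynomial R) • m) := by
  simp only [PsiMap, LinearMap.sub_apply, Finsupp.lmapDomain_apply,
    Finsupp.mapRange.linearMap_apply, Finsupp.mapRange_single, smulPoly_apply,
    Finsupp.mapDomain_single]

lemma PhiMap_PsiMap (p : ℕ →₀ M) : PhiMap R M (PsiMap R M p) = 0 := by
  have : (PhiMap R M) ∘ₗ (PsiMap R M) = 0 := by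
    apply Finsupp.lhom_ext
    intro n m
    simp only [LinearMap.comp_apply, LinearMap.zero_apply, PsiMap_single, map_sub,
      PhiMap_single]
    rw [pow_succ, mul_smul, sub_self]
  exact LinearMap.congr_fun this p

lemma finsupp_bound (q : ℕ →₀ M) : ∀ k, q.support.sup id + 1 ≤ k → q k = 0 := by
  intro k hk
  by_contra h
  have hks : k ∈ q.support := Finsupp.mem_support_iff.mpr h
  have : k ≤ q.support.sup id := Finset.le_sup (f := id) hks
  omega

lemma PsiMap_eq_zero (p : ℕ →₀ M) (hp : PsiMap R M p = 0) : p = 0 := by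
  have step : ∀ k, p k = (X : Polynomial R) • p (k + 1) := by
    intro k
    have h0 : PsiMap R M p (k + 1) = 0 := by rw [hp]; rfl
    rw [PsiMap_apply_succ] at h0
    exact sub_eq_zero.mp h0
  have key : ∀ j k, p k = (X : Polynomial R) ^ j • p (k + j) := by
    intro j
    induction j with
    | zero => intro k; simp
    | succ j ih =>
      intro k
      rw [ih k, step (k + j), smul_smul, ← pow_succ, ← Nat.add_assoc]
  ext k
  have hN : p (k + (p.support.sup id + 1)) = 0 :=
    finsupp_bound M p _ (by omega)
  rw [key (p.support.sup id + 1) k, hN, smul_zero, Finsupp.coe_zero, Pi.zero_apply]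

lemma PsiMap_exact_aux : ∀ (N : ℕ) (q : ℕ →₀ M), (∀ k, N ≤ k → q k = 0) →
    PhiMap R M q = 0 → ∃ p, PsiMap R M p = q := by
  intro N
  induction N with
  | zero =>
    intro q hq _
    have : q = 0 := by
      ext k; rw [hq k (Nat.zero_le k), Finsupp.coe_zero, Pi.zero_apply]
    exact ⟨0, by rw [map_zero, this]⟩
  | succ N ih =>
    intro q hq hΦ
    cases N with
    | zero =>
      have hq0 : q = Finsupp.single 0 (q 0) := by
        ext k
        cases k with
        | zero => rw [Finsupp.single_eq_same]
        | succ k =>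
          rw [hq (k + 1) (by omega), Finsupp.single_apply, if_neg (by omega)]
      rw [hq0, PhiMap_single, pow_zero, one_smul] at hΦ
      refine ⟨0, by rw [map_zero, hq0, hΦ, Finsupp.single_zero]⟩
    | succ N' =>
      set m := q (N' + 1) with hm
      set q' := q - PsiMap R M (Finsupp.single N' m) with hq'
      have hq'bound : ∀ k, N' + 1 ≤ k → q' k = 0 := by
        intro k hk
        rcases Nat.lt_or_ge k (N' + 2) with hk2 | hk2
        · have hkeq : k = N' + 1 := by omega
          subst hkeq
          rw [hq', Finsupp.sub_apply, PsiMap_apply_succ, Finsupp.single_eq_same,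
            Finsupp.single_apply, if_neg (by omega), smul_zero, sub_zero, sub_self]
        · obtain ⟨j, rfl⟩ : ∃ j, k = j + 1 := ⟨k - 1, by omega⟩
          rw [hq', Finsupp.sub_apply, PsiMap_apply_succ, hq (j + 1) (by omega),
            Finsupp.single_apply, if_neg (by omega), Finsupp.single_apply,
            if_neg (by omega), smul_zero, sub_zero, sub_zero]
      have hq'Φ : PhiMap R M q' = 0 := by
        rw [hq', map_sub, hΦ, PhiMap_PsiMap, sub_zero]
      obtain ⟨p', hp'⟩ := ih q' hq'bound hq'Φ
      refine ⟨p' + Finsupp.single N' m, ?_⟩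
      rw [map_add, hp', hq']
      abel

-- the tensor-level maps
noncomputable def psiT : Polynomial R ⊗[R] M →ₗ[Polynomial R] Polynomial R ⊗[R] M :=
  (X : Polynomial R) • LinearMap.id - (smulPoly R M X).baseChange (Polynomial R)

noncomputable def phiT : Polynomial R ⊗[R] M →ₗ[Polynomial R] M :=
  LinearMap.liftBaseChange (Polynomial R) LinearMap.id

lemma psiT_tmul (p : Polynomial R) (m : M) :
    psiT R M (p ⊗ₜ m) = (X * p) ⊗ₜ m - p ⊗ₜ ((X : Polynomial R) • m) := by
  simp only [psiT, LinearMap.sub_apply, LinearMap.smul_apply, LinearMap.id_apply,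
    LinearMap.baseChange_tmul, smulPoly_apply, TensorProduct.smul_tmul', smul_eq_mul]

lemma phiT_tmul (p : Polynomial R) (m : M) : phiT R M (p ⊗ₜ m) = p • m := by
  simp [phiT]

lemma smul_swap (r : R) (s : Polynomial R) (m : M) : r • (s • m) = s • (r • m) := by
  rw [← algebraMap_smul (Polynomial R) r m, ← algebraMap_smul (Polynomial R) r (s • m),
    smul_smul, smul_smul, mul_comm]

lemma c_psiT (x : Polynomial R ⊗[R] M) :
    cEquiv R M (psiT R M x) = PsiMap R M (cEquiv R M x) := by
  induction x using TensorProduct.induction_on with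
  | zero => simp
  | add x y hx hy => rw [map_add, map_add, map_add, map_add, hx, hy]
  | tmul p m =>
    induction p using Polynomial.induction_on' with
    | add p q hp hq =>
      rw [TensorProduct.add_tmul, map_add, map_add, map_add, map_add, hp, hq]
    | monomial n r =>
      rw [psiT_tmul, map_sub, X_mul_monomial, cEquiv_monomial, cEquiv_monomial,
        cEquiv_monomial, PsiMap_single, smul_swap]

lemma c_phiT (x : Polynomial R ⊗[R] M) :
    phiT R M x = PhiMap R M (cEquiv R M x) := by
  induction x using TensorProduct.induction_on with
  | zero => simp
  | add x y hx hy => rw [map_add, map_add, map_add, hx, hy]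
  | tmul p m =>
    induction p using Polynomial.induction_on' with
    | add p q hp hq =>
      rw [TensorProduct.add_tmul, map_add, map_add, map_add, hp, hq]
    | monomial n r =>
      rw [phiT_tmul, cEquiv_monomial, PhiMap_single, ← C_mul_X_pow_eq_monomial, mul_comm,
        mul_smul, ← Polynomial.algebraMap_eq, algebraMap_smul]


end poly


/-- Hilbert syzygy type estimate: the global dimension of `R[T]` is at most the
global dimension of `R` plus one. -/
theorem globalDim_polynomial_le (R : Type) [CommRing R] (d : ℕ)
    (hR : globalDimLE R d) : globalDimLE (Polynomial R) (d + 1) := by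
  intro M _ _
  letI : Module R M := Module.compHom M (algebraMap R (Polynomial R))
  haveI : IsScalarTower R (Polynomial R) M :=
    ⟨fun r s m => by rw [Algebra.smul_def, mul_smul]; rfl⟩
  haveI : Module.Free R (Polynomial R) := Module.Free.of_equiv (polyFinsuppEquiv R).symm
  have hA : projDimLE (Polynomial R) d (Polynomial R ⊗[R] M) := projDimLE_baseChange (hR M)
  have hcψ := c_psiT R M
  have hcφ := c_phiT R M
  have hinj : Function.Injective (psiT R M) := by
    intro x y hxy
    have h1 : cEquiv R M (psiT R M (x - y)) = 0 := by
      rw [map_sub, hxy, sub_self, map_zero]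
    rw [hcψ] at h1
    have h2 : cEquiv R M (x - y) = 0 := PsiMap_eq_zero R M _ h1
    have h3 : x - y = 0 := by
      apply (cEquiv R M).injective
      rw [h2, map_zero]
    exact sub_eq_zero.mp h3
  have hsurj : Function.Surjective (phiT R M) := by
    intro m
    refine ⟨(1 : Polynomial R) ⊗ₜ m, ?_⟩
    rw [phiT_tmul, one_smul]
  have hexact : Function.Exact (psiT R M) (phiT R M) := by
    intro y
    rw [hcφ y]
    constructor
    · intro h0
      obtain ⟨p, hp⟩ := PsiMap_exact_aux R M ((cEquiv R M y).support.sup id + 1)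
        (cEquiv R M y) (finsupp_bound M _) h0
      refine ⟨(cEquiv R M).symm p, ?_⟩
      apply (cEquiv R M).injective
      rw [hcψ, LinearEquiv.apply_symm_apply, hp]
    · rintro ⟨x, rfl⟩
      rw [hcψ x, PhiMap_PsiMap]
  exact projDimLE_quot (psiT R M) (phiT R M) hinj hsurj hexact hA hA
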